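/- Suppose the matrix M ∈ (0,∞)^{m×n} has the block-product structure M_{ij} = θ_i λ_j μ_{z_i w_j} for some θ ∈ (0,∞)^m, λ ∈ (0,∞)^n, μ ∈ (0,∞)^{K×L}. Then the quantity M_{ij} / (θ*_i λ*_j), with θ* and λ* the canonical degree parameters of M, depends on (i,j) only through the labels (z_i, w_j); that is, for all i, i' ∈ {1,…,m} and j, j' ∈ {1,…,n} with z_i = z_{i'} and w_j = w_{j'}, one has M_{ij}/(θ*_i λ*_j) = M_{i'j'}/(θ*_{i'} λ*_{j'}). Consequently the canonical matrix μ* defined by μ*_{kl} = M_{ij}/(θ*_i λ*_j) for any i with z_i = k and j with w_j = l is well defined. -/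
import Mathlib


open scoped BigOperators

namespace DCLBM

/-- Canonical row degree parameter `θ*_i` of a positive matrix `M`. -/
noncomputable def thetaStar {m n : ℕ} (M : Fin m → Fin n → ℝ) (i : Fin m) : ℝ :=
  ((1 / (n : ℝ)) * ∑ j, M i j) /
    Real.sqrt ((1 / ((m : ℝ) * (n : ℝ))) * ∑ i', ∑ j, M i' j)

/-- Canonical column degree parameter `λ*_j` of a positive matrix `M`. -/
noncomputable def lamStar {m n : ℕ} (M : Fin m → Fin n → ℝ) (j : Fin n) : ℝ :=
  ((1 / (m : ℝ)) * ∑ i, M i j) /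
    Real.sqrt ((1 / ((m : ℝ) * (n : ℝ))) * ∑ i, ∑ j', M i j')

end DCLBM

/-- Proposition 3: if `M` has the block-product structure
`M_{ij} = θ_i λ_j μ_{z_i w_j}` with positive `θ, λ, μ`, then `M_{ij}/(θ*_i λ*_j)` depends on
`(i, j)` only through the labels `(z_i, w_j)`, so the canonical matrix `μ*` is well defined. -/
theorem statement4 (m n K L : ℕ) (hm : 0 < m) (hn : 0 < n) (hK : 0 < K) (hL : 0 < L)
    (z : Fin m → Fin K) (w : Fin n → Fin L)
    (M : Fin m → Fin n → ℝ) (hM : ∀ i j, 0 < M i j)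
    (θ : Fin m → ℝ) (lam : Fin n → ℝ) (μm : Fin K → Fin L → ℝ)
    (hθ : ∀ i, 0 < θ i) (hlam : ∀ j, 0 < lam j) (hμm : ∀ k l, 0 < μm k l)
    (hblock : ∀ i j, M i j = θ i * lam j * μm (z i) (w j)) :
    ∀ (i i' : Fin m) (j j' : Fin n), z i = z i' → w j = w j' →
      M i j / (DCLBM.thetaStar M i * DCLBM.lamStar M j) =
        M i' j' / (DCLBM.thetaStar M i' * DCLBM.lamStar M j') := by
  have hmn : Nonempty (Fin m) := ⟨⟨0, hm⟩⟩
  have hnn : Nonempty (Fin n) := ⟨⟨0, hn⟩⟩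
  set T : ℝ := ∑ i, ∑ j, M i j with hT
  have hTpos : 0 < T :=
    Finset.sum_pos (fun i _ => Finset.sum_pos (fun j _ => hM i j) Finset.univ_nonempty)
      Finset.univ_nonempty
  have hm' : (0:ℝ) < m := by exact_mod_cast hm
  have hn' : (0:ℝ) < n := by exact_mod_cast hn
  set c : ℝ := (1 / ((m : ℝ) * (n : ℝ))) * T with hc
  have hcpos : 0 < c := by positivity
  set s : ℝ := Real.sqrt c with hs
  have hspos : 0 < s := Real.sqrt_pos.mpr hcpos
  have hs2 : s * s = c := Real.mul_self_sqrt hcpos.le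
  set R : Fin K → ℝ := fun k => ∑ j, lam j * μm k (w j) with hR
  set C : Fin L → ℝ := fun l => ∑ i, θ i * μm (z i) l with hC
  have hRpos : ∀ k, 0 < R k := fun k =>
    Finset.sum_pos (fun j _ => mul_pos (hlam j) (hμm k (w j))) Finset.univ_nonempty
  have hCpos : ∀ l, 0 < C l := fun l =>
    Finset.sum_pos (fun i _ => mul_pos (hθ i) (hμm (z i) l)) Finset.univ_nonempty
  have hrow : ∀ i : Fin m, ∑ j, M i j = θ i * R (z i) := by
    intro i
    rw [hR, Finset.mul_sum]
    exact Finset.sum_congr rfl fun j _ => by rw [hblock]; ring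
  have hcol : ∀ j : Fin n, ∑ i, M i j = lam j * C (w j) := by
    intro j
    rw [hC, Finset.mul_sum]
    exact Finset.sum_congr rfl fun i _ => by rw [hblock]; ring
  have key : ∀ (i : Fin m) (j : Fin n),
      M i j / (DCLBM.thetaStar M i * DCLBM.lamStar M j) =
        μm (z i) (w j) * ((m : ℝ) * n * c) / (R (z i) * C (w j)) := by
    intro i j
    unfold DCLBM.thetaStar DCLBM.lamStar
    rw [← hT, ← hc, ← hs, hrow i, hcol j, hblock i j]
    have h1 : θ i ≠ 0 := (hθ i).ne'
    have h2 : lam j ≠ 0 := (hlam j).ne'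
    have h3 : R (z i) ≠ 0 := (hRpos (z i)).ne'
    have h4 : C (w j) ≠ 0 := (hCpos (w j)).ne'
    field_simp
    rw [← hs2]
    ring
  intro i i' j j' hz hw
  rw [key, key, hz, hw]
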